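/- Let s : ℕ → Fin (G+1) be an infinite sequence of concept group values with G ≥ 1, and let β ≥ G. Suppose for every k ∈ {1,...,G}: (a) there exists m < β with s(m) = k, and (b) for every m₁ with s(m₁) = k there exists m₂ with m₁ < m₂ ≤ m₁ + β and s(m₂) = k. If for each k the limiting frequency F(k) := lim_{n→∞} |{m < n : s(m) = k}| / n exists, then for all k₁, k₂ ∈ {1,...,G}, |F(k₁) − F(k₂)| ≤ 1 − G/β. -/

import Mathlib

open Finset Filter

private lemma occ_count (G β : ℕ) (hβpos : 0 < β) (s : ℕ → Fin (G + 1))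
    (k : Fin (G+1))
    (h1 : ∃ m < β, s m = k)
    (h2 : ∀ m₁, s m₁ = k → ∃ m₂, m₁ < m₂ ∧ m₂ ≤ m₁ + β ∧ s m₂ = k) :
    ∀ j : ℕ, ∃ m, s m = k ∧ m < (j+1)*β ∧
      j+1 ≤ ((Finset.range (m+1)).filter (fun m => s m = k)).card := by
  intro j
  induction j with
  | zero =>
    obtain ⟨m, hm, hsm⟩ := h1
    refine ⟨m, hsm, by omega, ?_⟩
    have : m ∈ (Finset.range (m+1)).filter (fun m => s m = k) := by
      simp [hsm]
    exact Finset.card_pos.mpr ⟨m, this⟩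
  | succ j ih =>
    obtain ⟨m, hsm, hmlt, hcard⟩ := ih
    obtain ⟨m₂, hlt, hle, hsm₂⟩ := h2 m hsm
    have hring : (j+1+1)*β = (j+1)*β + β := by ring
    refine ⟨m₂, hsm₂, by omega, ?_⟩
    have hsub : insert m₂ ((Finset.range (m+1)).filter (fun m => s m = k)) ⊆
        (Finset.range (m₂+1)).filter (fun m => s m = k) := by
      intro x hx
      rcases Finset.mem_insert.mp hx with h | h
      · subst h; simp [hsm₂]
      · simp only [Finset.mem_filter, Finset.mem_range] at h ⊢
        exact ⟨by omega, h.2⟩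
    have hnotmem : m₂ ∉ (Finset.range (m+1)).filter (fun m => s m = k) := by
      simp only [Finset.mem_filter, Finset.mem_range]
      omega
    have := Finset.card_le_card hsub
    rw [Finset.card_insert_of_notMem hnotmem] at this
    omega

private lemma count_lb (G β : ℕ) (hβpos : 0 < β) (s : ℕ → Fin (G + 1))
    (k : Fin (G+1))
    (h1 : ∃ m < β, s m = k)
    (h2 : ∀ m₁, s m₁ = k → ∃ m₂, m₁ < m₂ ∧ m₂ ≤ m₁ + β ∧ s m₂ = k) :
    ∀ n : ℕ, n / β ≤ ((Finset.range n).filter (fun m => s m = k)).card := by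
  intro n
  rcases Nat.eq_zero_or_pos (n / β) with h | h
  · omega
  · obtain ⟨m, hsm, hmlt, hcard⟩ := occ_count G β hβpos s k h1 h2 (n / β - 1)
    have h1' : (n / β - 1 + 1) * β = (n / β) * β := by
      congr 1; omega
    have h2' : (n / β) * β ≤ n := Nat.div_mul_le_self n β
    have hsub : (Finset.range (m+1)).filter (fun m => s m = k) ⊆
        (Finset.range n).filter (fun m => s m = k) :=
      Finset.filter_subset_filter _ (by intro x hx; simp only [Finset.mem_range] at hx ⊢; omega)
    have := Finset.card_le_card hsub
    omega

theorem stmt_0 (G β : ℕ) (hG : 1 ≤ G) (hβ : G ≤ β)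
    (s : ℕ → Fin (G + 1))
    (hfair : ∀ k : Fin (G + 1), k ≠ 0 →
      (∃ m < β, s m = k) ∧
      (∀ m₁, s m₁ = k → ∃ m₂, m₁ < m₂ ∧ m₂ ≤ m₁ + β ∧ s m₂ = k))
    (F : Fin (G + 1) → ℝ)
    (hF : ∀ k : Fin (G + 1), k ≠ 0 →
      Filter.Tendsto
        (fun n : ℕ => (((Finset.range n).filter (fun m => s m = k)).card : ℝ) / n)
        Filter.atTop (nhds (F k))) :
    ∀ k₁ k₂ : Fin (G + 1), k₁ ≠ 0 → k₂ ≠ 0 →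
      |F k₁ - F k₂| ≤ 1 - (G : ℝ) / (β : ℝ) := by
  have hβpos : 0 < β := lt_of_lt_of_le hG hβ
  have hβR : (0:ℝ) < (β:ℝ) := by exact_mod_cast hβpos
  -- lower bound on frequencies
  have hlow : ∀ k : Fin (G+1), k ≠ 0 → 1/(β:ℝ) ≤ F k := by
    intro k hk
    have hcnt := count_lb G β hβpos s k (hfair k hk).1 (hfair k hk).2
    have htend : Tendsto (fun n : ℕ => 1/(β:ℝ) - 1/(n:ℝ)) atTop (nhds (1/(β:ℝ))) := by
      have : Tendsto (fun n : ℕ => 1/(n:ℝ)) atTop (nhds 0) := tendsto_one_div_atTop_nhds_zero_nat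
      simpa using (tendsto_const_nhds (x := 1/(β:ℝ))).sub this
    refine le_of_tendsto_of_tendsto htend (hF k hk) ?_
    filter_upwards [eventually_ge_atTop 1] with n hn
    have hnR : (0:ℝ) < (n:ℝ) := by exact_mod_cast hn
    have h1 : ((n / β : ℕ) : ℝ) ≤ (((Finset.range n).filter (fun m => s m = k)).card : ℝ) := by
      exact_mod_cast hcnt n
    have h2 : (n:ℝ)/(β:ℝ) - 1 ≤ ((n / β : ℕ) : ℝ) := by
      have hdm := Nat.div_add_mod n β
      have hmod : n % β < β := Nat.mod_lt n hβpos
      have : (n:ℝ) < (β:ℝ) * ((n / β : ℕ) : ℝ) + (β:ℝ) := by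
        have : (β:ℝ) * ((n / β : ℕ) : ℝ) + ((n % β : ℕ) : ℝ) = (n:ℝ) := by exact_mod_cast hdm
        have hm : ((n % β : ℕ) : ℝ) < (β:ℝ) := by exact_mod_cast hmod
        linarith
      rw [div_sub_one (ne_of_gt hβR), div_le_iff₀ hβR]
      nlinarith
    calc 1/(β:ℝ) - 1/(n:ℝ) = ((n:ℝ)/β - 1)/n := by
          field_simp
      _ ≤ ((n / β : ℕ) : ℝ)/n := by gcongr
      _ ≤ (((Finset.range n).filter (fun m => s m = k)).card : ℝ) / n := by gcongr
  set S : Finset (Fin (G+1)) := Finset.univ.filter (fun k => k ≠ 0) with hS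
  have hmemS : ∀ k : Fin (G+1), k ≠ 0 → k ∈ S := by
    intro k hk; simp [hS, hk]
  have hSne : ∀ k ∈ S, k ≠ 0 := by
    intro k hk; simp [hS] at hk; exact hk
  have hScard : S.card = G := by
    rw [hS, Finset.filter_ne', Finset.card_erase_of_mem (Finset.mem_univ _),
      Finset.card_univ, Fintype.card_fin]
    omega
  have hsum : ∑ k ∈ S, F k ≤ 1 := by
    have htend : Tendsto (fun n : ℕ => ∑ k ∈ S,
        (((Finset.range n).filter (fun m => s m = k)).card : ℝ) / n) atTop
        (nhds (∑ k ∈ S, F k)) :=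
      tendsto_finset_sum S (fun k hk => hF k (hSne k hk))
    refine le_of_tendsto htend ?_
    filter_upwards [eventually_ge_atTop 1] with n hn
    have hnR : (0:ℝ) < (n:ℝ) := by exact_mod_cast hn
    have hdisj : ∀ a ∈ S, ∀ b ∈ S, a ≠ b →
        Disjoint ((Finset.range n).filter (fun m => s m = a))
          ((Finset.range n).filter (fun m => s m = b)) := by
      intro a _ b _ hab
      apply Finset.disjoint_filter_filter'
      rw [Pi.disjoint_iff]
      intro m
      by_cases h : s m = a
      · simp [h, hab]
      · simp [h]
    have hcards : ∑ k ∈ S, ((Finset.range n).filter (fun m => s m = k)).card ≤ n := by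
      rw [← Finset.card_biUnion hdisj]
      calc (S.biUnion fun k => (Finset.range n).filter (fun m => s m = k)).card
          ≤ (Finset.range n).card := Finset.card_le_card (by
            intro x hx
            simp only [Finset.mem_biUnion, Finset.mem_filter] at hx
            obtain ⟨_, _, hx2, _⟩ := hx
            exact hx2)
        _ = n := Finset.card_range n
    calc ∑ k ∈ S, (((Finset.range n).filter (fun m => s m = k)).card : ℝ) / n
        = (∑ k ∈ S, (((Finset.range n).filter (fun m => s m = k)).card : ℝ)) / n := by
          rw [Finset.sum_div]
      _ ≤ (n:ℝ)/n := by
          gcongr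
          exact_mod_cast hcards
      _ = 1 := div_self (ne_of_gt hnR)
  have hub : ∀ a ∈ S, F a ≤ 1 - ((G:ℝ)-1) * (1/(β:ℝ)) := by
    intro a ha
    have hsplit : F a + ∑ k ∈ S.erase a, F k = ∑ k ∈ S, F k :=
      Finset.add_sum_erase S F ha
    have hlowsum : ((S.erase a).card : ℝ) * (1/(β:ℝ)) ≤ ∑ k ∈ S.erase a, F k := by
      have := Finset.card_nsmul_le_sum (S.erase a) F (1/(β:ℝ))
        (fun x hx => hlow x (hSne x (Finset.mem_of_mem_erase hx)))
      simpa [nsmul_eq_mul] using this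
    have hc : ((S.erase a).card : ℝ) = (G:ℝ) - 1 := by
      rw [Finset.card_erase_of_mem ha, hScard]
      have : (1:ℕ) ≤ G := hG
      push_cast [Nat.cast_sub hG]
      ring
    rw [hc] at hlowsum
    linarith
  intro k₁ k₂ h1 h2
  have key : ∀ a, a ≠ 0 → ∀ b, b ≠ 0 → F a - F b ≤ 1 - (G:ℝ)/(β:ℝ) := by
    intro a ha b hb
    have h3 := hub a (hmemS a ha)
    have h4 := hlow b hb
    have h5 : ((G:ℝ)-1) * (1/(β:ℝ)) + 1/(β:ℝ) = (G:ℝ)/(β:ℝ) := by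
      field_simp
      ring
    linarith
  rw [abs_sub_le_iff]
  exact ⟨key k₁ h1 k₂ h2, key k₂ h2 k₁ h1⟩
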